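/- Consider min { h(y) = yᵀQy + 2gᵀy : ‖y‖ ≤ 1, Ay − b ∈ 𝒦 } with λ_Q < 0 and nonempty feasible set. Suppose there exists d ≠ 0 with Qd = λ_Q d, Ad ∈ 𝒦 and gᵀd ≤ 0. Then the convex relaxation min { f(y) = yᵀ(Q − λ_Q I)y + 2gᵀy + λ_Q : ‖y‖ ≤ 1, Ay − b ∈ 𝒦 } has the same optimal value. -/

import Mathlib

open Matrix RealInnerProductSpace

private lemma aux_dot_expand {n : ℕ} (u v : Fin n → ℝ) (t : ℝ) :
    (u + t • v) ⬝ᵥ (u + t • v) = u ⬝ᵥ u + 2 * t * (u ⬝ᵥ v) + t ^ 2 * (v ⬝ᵥ v) := by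
  simp only [dotProduct_add, add_dotProduct, dotProduct_smul, smul_dotProduct, smul_eq_mul,
    dotProduct_comm v u]
  ring

private lemma aux_Q_expand {n : ℕ} (Q : Matrix (Fin n) (Fin n) ℝ) (hQ : Q.IsSymm)
    (lam t : ℝ) (u v : Fin n → ℝ) (hv : Q.mulVec v = lam • v) :
    (u + t • v) ⬝ᵥ Q.mulVec (u + t • v) =
      u ⬝ᵥ Q.mulVec u + 2 * t * lam * (u ⬝ᵥ v) + t ^ 2 * lam * (v ⬝ᵥ v) := by
  have hsym : v ⬝ᵥ Q.mulVec u = u ⬝ᵥ Q.mulVec v := by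
    rw [Matrix.dotProduct_mulVec, ← Matrix.mulVec_transpose, hQ.eq, dotProduct_comm]
  rw [Matrix.mulVec_add, Matrix.mulVec_smul, hv]
  simp only [dotProduct_add, add_dotProduct, dotProduct_smul, smul_dotProduct, smul_eq_mul,
    hsym, hv]
  ring

private lemma aux_g_expand {n : ℕ} (gv u v : Fin n → ℝ) (t : ℝ) :
    gv ⬝ᵥ (u + t • v) = gv ⬝ᵥ u + t * (gv ⬝ᵥ v) := by
  simp only [dotProduct_add, dotProduct_smul, smul_eq_mul]

theorem conic_TRS_tight_relaxation {n m : ℕ} (Q : Matrix (Fin n) (Fin n) ℝ)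
    (g : EuclideanSpace ℝ (Fin n)) (lamQ : ℝ)
    (A : Matrix (Fin m) (Fin n) ℝ) (b : Fin m → ℝ) (K : Set (Fin m → ℝ))
    (hQ : Q.IsSymm)
    (hlb : ∀ y : EuclideanSpace ℝ (Fin n), lamQ * ‖y‖ ^ 2 ≤ y ⬝ᵥ Q.mulVec y)
    (hev : ∃ v : EuclideanSpace ℝ (Fin n), v ≠ 0 ∧ Q.mulVec v = lamQ • (v : Fin n → ℝ))
    (hneg : lamQ < 0)
    (hKclosed : IsClosed K) (hKconv : Convex ℝ K)
    (hKcone : ∀ x ∈ K, ∀ c : ℝ, 0 ≤ c → c • x ∈ K)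
    (S : Set (EuclideanSpace ℝ (Fin n)))
    (hS : S = {y : EuclideanSpace ℝ (Fin n) | ‖y‖ ≤ 1 ∧ A.mulVec y - b ∈ K})
    (hSne : S.Nonempty)
    (hcond : ∃ d : EuclideanSpace ℝ (Fin n), d ≠ 0 ∧
      Q.mulVec d = lamQ • (d : Fin n → ℝ) ∧ A.mulVec d ∈ K ∧ g ⬝ᵥ d ≤ 0) :
    sInf ((fun y : EuclideanSpace ℝ (Fin n) => y ⬝ᵥ Q.mulVec y + 2 * (g ⬝ᵥ y)) '' S) =
      sInf ((fun y : EuclideanSpace ℝ (Fin n) =>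
        y ⬝ᵥ (Q - lamQ • (1 : Matrix (Fin n) (Fin n) ℝ)).mulVec y + 2 * (g ⬝ᵥ y) + lamQ) '' S) := by
  obtain ⟨d, hd0, hdev, hAd, hgd⟩ := hcond
  set h : EuclideanSpace ℝ (Fin n) → ℝ :=
    fun y => y ⬝ᵥ Q.mulVec y + 2 * (g ⬝ᵥ y) with hhdef
  set f : EuclideanSpace ℝ (Fin n) → ℝ :=
    fun y => y ⬝ᵥ (Q - lamQ • (1 : Matrix (Fin n) (Fin n) ℝ)).mulVec y + 2 * (g ⬝ᵥ y) + lamQ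
    with hfdef
  have dotself : ∀ y : EuclideanSpace ℝ (Fin n), (y : Fin n → ℝ) ⬝ᵥ y = ‖y‖ ^ 2 := by
    intro y
    rw [← real_inner_self_eq_norm_sq]
    simp [dotProduct, PiLp.inner_apply, RCLike.inner_apply]
    rw [EuclideanSpace.norm_eq, Real.sq_sqrt (Finset.sum_nonneg (fun i _ => sq_nonneg _))]
    simp [sq]
  have hfh : ∀ y : EuclideanSpace ℝ (Fin n),
      f y = h y + lamQ * (1 - ‖y‖ ^ 2) := by
    intro y
    rw [← dotself]
    simp only [hfdef, hhdef, Matrix.sub_mulVec, Matrix.smul_mulVec, Matrix.one_mulVec,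
      dotProduct_sub, dotProduct_smul, smul_eq_mul]
    ring
  have hgdot : ∀ y : EuclideanSpace ℝ (Fin n), ‖y‖ ≤ 1 → -‖g‖ ≤ (g : Fin n → ℝ) ⬝ᵥ y := by
    intro y hy
    have h1 : (g : Fin n → ℝ) ⬝ᵥ y = ⟪g, y⟫ := by
      simp [dotProduct, PiLp.inner_apply, RCLike.inner_apply]
      exact Finset.sum_congr rfl (fun i _ => mul_comm _ _)
    have h2 := abs_real_inner_le_norm g y
    have h3 : ‖g‖ * ‖y‖ ≤ ‖g‖ * 1 :=
      mul_le_mul_of_nonneg_left hy (norm_nonneg g)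
    rw [h1]
    have := neg_abs_le (⟪g, y⟫ : ℝ)
    nlinarith [abs_nonneg (⟪g, y⟫ : ℝ)]
  have hbddh : ∀ y ∈ S, 2 * lamQ - 2 * ‖g‖ ≤ h y := by
    intro y hy
    rw [hS] at hy
    obtain ⟨hy1, _⟩ := hy
    have hn2 : ‖y‖ ^ 2 ≤ 1 := by nlinarith [norm_nonneg y]
    have hl1 : lamQ * 1 ≤ lamQ * ‖y‖ ^ 2 := mul_le_mul_of_nonpos_left hn2 hneg.le
    have := hlb y
    have := hgdot y hy1
    simp only [hhdef]
    nlinarith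
  have hbddf : ∀ y ∈ S, 2 * lamQ - 2 * ‖g‖ ≤ f y := by
    intro y hy
    have hymem := hy
    rw [hS] at hymem
    obtain ⟨hy1, _⟩ := hymem
    have hn2 : ‖y‖ ^ 2 ≤ 1 := by nlinarith [norm_nonneg y]
    have hl1 : lamQ * 1 ≤ lamQ * ‖y‖ ^ 2 := mul_le_mul_of_nonpos_left hn2 hneg.le
    have hl2 : lamQ * 1 ≤ lamQ * (1 - ‖y‖ ^ 2) :=
      mul_le_mul_of_nonpos_left (by nlinarith [norm_nonneg y]) hneg.le
    rw [hfh]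
    have := hlb y
    have := hgdot y hy1
    simp only [hhdef]
    nlinarith
  have hSne' : ((fun y => h y) '' S).Nonempty := hSne.image _
  have hSnef : ((fun y => f y) '' S).Nonempty := hSne.image _
  have hbdd1 : BddBelow ((fun y => h y) '' S) :=
    ⟨2 * lamQ - 2 * ‖g‖, by rintro _ ⟨y, hy, rfl⟩; exact hbddh y hy⟩
  have hbdd2 : BddBelow ((fun y => f y) '' S) :=
    ⟨2 * lamQ - 2 * ‖g‖, by rintro _ ⟨y, hy, rfl⟩; exact hbddf y hy⟩
  have key : ∀ y ∈ S, ∃ z ∈ S, h z ≤ f y := by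
    intro y hy
    have hymem := hy
    rw [hS] at hymem
    obtain ⟨hy1, hy2⟩ := hymem
    have hdpos : (0:ℝ) < ‖d‖ := norm_pos_iff.mpr hd0
    have hcont : ContinuousOn (fun t : ℝ => ‖y + t • d‖) (Set.Icc 0 ((1 + ‖y‖) / ‖d‖)) := by
      fun_prop
    have hT : (0:ℝ) ≤ (1 + ‖y‖) / ‖d‖ := by positivity
    have hup : (1:ℝ) ≤ ‖y + ((1 + ‖y‖) / ‖d‖) • d‖ := by
      have h1 : ‖((1 + ‖y‖) / ‖d‖) • d‖ = 1 + ‖y‖ := by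
        rw [norm_smul, Real.norm_eq_abs, abs_of_nonneg hT]
        field_simp
      have h2 : ‖((1 + ‖y‖) / ‖d‖) • d‖ = ‖(y + ((1 + ‖y‖) / ‖d‖) • d) - y‖ := by
        rw [add_sub_cancel_left]
      have h3 := norm_sub_le (y + ((1 + ‖y‖) / ‖d‖) • d) y
      rw [← h2, h1] at h3
      linarith
    have hIVT := intermediate_value_Icc hT hcont
    have h1mem : (1:ℝ) ∈ Set.Icc ‖y + (0:ℝ) • d‖ ‖y + ((1 + ‖y‖) / ‖d‖) • d‖ := by
      constructor
      · simpa using hy1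
      · exact hup
    obtain ⟨t, ht, hteq⟩ := hIVT h1mem
    have ht0 : 0 ≤ t := ht.1
    set z : EuclideanSpace ℝ (Fin n) := y + t • d with hzdef
    have hz1 : ‖z‖ = 1 := by simpa using hteq
    have hzS : z ∈ S := by
      rw [hS]
      refine ⟨le_of_eq hz1, ?_⟩
      have hAz : A.mulVec (z : Fin n → ℝ) - b = (A.mulVec y - b) + t • A.mulVec d := by
        show A.mulVec (y + t • d : Fin n → ℝ) - b = _
        rw [Matrix.mulVec_add, Matrix.mulVec_smul]
        abel
      rw [hAz]
      have htd : t • A.mulVec (d : Fin n → ℝ) ∈ K := hKcone _ hAd t ht0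
      have hhalf : (1/2 : ℝ) • (A.mulVec y - b) + (1/2 : ℝ) • (t • A.mulVec (d : Fin n → ℝ)) ∈ K :=
        hKconv hy2 htd (by norm_num) (by norm_num) (by norm_num)
      have := hKcone _ hhalf 2 (by norm_num)
      rwa [smul_add, smul_smul, smul_smul, show (2:ℝ) * (1/2) = 1 by norm_num, one_smul,
        one_smul] at this
    refine ⟨z, hzS, ?_⟩
    have hzz : (z : Fin n → ℝ) ⬝ᵥ z = 1 := by rw [dotself, hz1]; norm_num
    have hexp : (z : Fin n → ℝ) ⬝ᵥ z =
        (y : Fin n → ℝ) ⬝ᵥ y + 2 * t * ((y : Fin n → ℝ) ⬝ᵥ d)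
          + t ^ 2 * ((d : Fin n → ℝ) ⬝ᵥ d) := aux_dot_expand y d t
    have hQz : (z : Fin n → ℝ) ⬝ᵥ Q.mulVec z =
        (y : Fin n → ℝ) ⬝ᵥ Q.mulVec y + 2 * t * lamQ * ((y : Fin n → ℝ) ⬝ᵥ d)
          + t ^ 2 * lamQ * ((d : Fin n → ℝ) ⬝ᵥ d) := aux_Q_expand Q hQ lamQ t y d hdev
    have hgz : (g : Fin n → ℝ) ⬝ᵥ z = (g : Fin n → ℝ) ⬝ᵥ y + t * ((g : Fin n → ℝ) ⬝ᵥ d) :=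
      aux_g_expand g y d t
    have hfy := hfh y
    rw [← dotself] at hfy
    have hgd' : t * ((g : Fin n → ℝ) ⬝ᵥ d) ≤ 0 := mul_nonpos_of_nonneg_of_nonpos ht0 hgd
    simp only [hhdef]
    rw [hQz, hgz, hfy]
    simp only [hhdef]
    have h1 : (y : Fin n → ℝ) ⬝ᵥ y + 2 * t * ((y : Fin n → ℝ) ⬝ᵥ d)
        + t ^ 2 * ((d : Fin n → ℝ) ⬝ᵥ d) = 1 := by rw [← hexp, hzz]
    have h2 : lamQ * ((y : Fin n → ℝ) ⬝ᵥ y + 2 * t * ((y : Fin n → ℝ) ⬝ᵥ d)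
        + t ^ 2 * ((d : Fin n → ℝ) ⬝ᵥ d)) = lamQ := by rw [h1, mul_one]
    nlinarith [h2, hgd']
  apply le_antisymm
  · apply le_csInf hSnef
    rintro _ ⟨y, hy, rfl⟩
    obtain ⟨z, hzS, hzle⟩ := key y hy
    exact le_trans (csInf_le hbdd1 ⟨z, hzS, rfl⟩) hzle
  · apply le_csInf hSne'
    rintro _ ⟨y, hy, rfl⟩
    have hymem := hy
    rw [hS] at hymem
    obtain ⟨hy1, _⟩ := hymem
    have hfyh : f y ≤ h y := by
      rw [hfh]
      have hn2 : ‖y‖ ^ 2 ≤ 1 := by nlinarith [norm_nonneg y]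
      nlinarith [mul_nonneg (neg_nonneg.mpr hneg.le) (by linarith : (0:ℝ) ≤ 1 - ‖y‖ ^ 2)]
    exact le_trans (csInf_le hbdd2 ⟨y, hy, rfl⟩) hfyh
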